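/- arXiv:2506.01316 — 2 statements merged into one kernel-verified Lean document; each statement's English description precedes it below -/
import Mathlib

section
/- Assume additionally that m(e) ≥ κ for all e ∈ 𝕍, where 0 < κ ≤ 1. Then the probability vector u_z is uniformly elliptic: for every e ∈ 𝕍, u_z(e) ≥ 2 C_z κ² / (1 + √(1 + 4 C_z)). In particular there exists c_z = c_z(κ) > 0 with u_z(e) ≥ c_z for all e ∈ 𝕍. -/
open Finset

/-- `unitVecs d` is the set `𝕍 = {e ∈ ℤ^d : |e|₁ = 1}` of signed unit coordinate vectors. -/
noncomputable def unitVecs (d : ℕ) : Finset (Fin d → ℤ) :=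
  (Finset.Icc (fun _ => (-1 : ℤ)) (fun _ => 1)).filter (fun e => ∑ i, |e i| = 1)

/-- The inner product `⟨z, e⟩` of `z ∈ ℝ^d` with `e ∈ ℤ^d`. -/
noncomputable def innZ {d : ℕ} (z : Fin d → ℝ) (e : Fin d → ℤ) : ℝ :=
  ∑ i, z i * (e i : ℝ)

lemma neg_mem_unitVecs {d : ℕ} {e : Fin d → ℤ} (h : e ∈ unitVecs d) :
    -e ∈ unitVecs d := by
  simp only [unitVecs, Finset.mem_filter, Finset.mem_Icc, Pi.le_def] at h ⊢
  obtain ⟨⟨h1, h2⟩, h3⟩ := h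
  refine ⟨⟨fun i => ?_, fun i => ?_⟩, ?_⟩
  · have := h2 i; simp only [Pi.neg_apply]; omega
  · have := h1 i; simp only [Pi.neg_apply]; omega
  · simpa using h3

lemma abs_innZ_le {d : ℕ} {z : Fin d → ℝ} {e : Fin d → ℤ} (h : e ∈ unitVecs d) :
    |innZ z e| ≤ ∑ i, |z i| := by
  simp only [unitVecs, Finset.mem_filter, Finset.mem_Icc, Pi.le_def] at h
  obtain ⟨⟨h1, h2⟩, _⟩ := h
  calc |innZ z e| ≤ ∑ i, |z i * (e i : ℝ)| := Finset.abs_sum_le_sum_abs _ _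
    _ ≤ ∑ i, |z i| := by
        refine Finset.sum_le_sum fun i _ => ?_
        rw [abs_mul]
        have he : |(e i : ℝ)| ≤ 1 := by
          have h3 : |e i| ≤ 1 := abs_le.mpr ⟨h1 i, h2 i⟩
          exact_mod_cast h3
        nlinarith [abs_nonneg (z i)]

/-- uniform ellipticity of `u_z`:
`u_z(e) ≥ 2 C_z κ² / (1 + √(1 + 4 C_z))` for all `e ∈ 𝕍`, and in particular
there is `c_z > 0` with `u_z(e) ≥ c_z` on `𝕍`. -/
theorem stmt6 (d : ℕ) (hd : 1 ≤ d) (z : Fin d → ℝ) (hz : ∑ i, |z i| < 1)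
    (m : (Fin d → ℤ) → ℝ) (hm : ∀ e ∈ unitVecs d, 0 < m e ∧ m e ≤ 1)
    (hm1 : ∑ e ∈ unitVecs d, m e = 1)
    (C : ℝ) (hC : 0 < C)
    (hfC : (1/2) * ∑ e ∈ unitVecs d,
      Real.sqrt ((innZ z e)^2 + 4 * C * m e * m (-e)) = 1)
    (u : (Fin d → ℤ) → ℝ)
    (hu : ∀ e ∈ unitVecs d,
      2 * u e = innZ z e + Real.sqrt ((innZ z e)^2 + 4 * C * m e * m (-e)))
    (κ : ℝ) (hκ0 : 0 < κ) (hκ1 : κ ≤ 1) (hκm : ∀ e ∈ unitVecs d, κ ≤ m e) :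
    (∀ e ∈ unitVecs d, 2 * C * κ^2 / (1 + Real.sqrt (1 + 4 * C)) ≤ u e) ∧
      ∃ c : ℝ, 0 < c ∧ ∀ e ∈ unitVecs d, c ≤ u e := by
  have hsq : (0:ℝ) ≤ Real.sqrt (1 + 4 * C) := Real.sqrt_nonneg _
  have hD0 : (0:ℝ) < 1 + Real.sqrt (1 + 4 * C) := by linarith
  have main : ∀ e ∈ unitVecs d, 2 * C * κ^2 / (1 + Real.sqrt (1 + 4 * C)) ≤ u e := by
    intro e he
    have hne := neg_mem_unitVecs he
    obtain ⟨hme0, hme1⟩ := hm e he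
    obtain ⟨hmne0, hmne1⟩ := hm (-e) hne
    have hκe := hκm e he
    have hκne := hκm (-e) hne
    have h2u := hu e he
    set a : ℝ := innZ z e with ha
    have hb0 : (0:ℝ) < 4 * C * m e * m (-e) := by positivity
    have hbκ : 4 * C * κ^2 ≤ 4 * C * m e * m (-e) := by
      have h6 : κ * κ ≤ m e * m (-e) := mul_le_mul hκe hκne hκ0.le hme0.le
      have h7 : 0 ≤ 4 * C * (m e * m (-e) - κ * κ) :=
        mul_nonneg (by linarith) (by linarith)
      nlinarith [h7]
    have hb4C : 4 * C * m e * m (-e) ≤ 4 * C := by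
      have h6 : m e * m (-e) ≤ 1 * 1 := mul_le_mul hme1 hmne1 hmne0.le zero_le_one
      have h7 : 0 ≤ 4 * C * (1 - m e * m (-e)) :=
        mul_nonneg (by linarith) (by linarith)
      nlinarith [h7]
    have ha1 : |a| ≤ 1 := (abs_innZ_le he).trans hz.le
    have hna : -a ≤ 1 := by have := neg_abs_le a; linarith
    have haa : a ≤ 1 := by have := le_abs_self a; linarith
    set s : ℝ := Real.sqrt (a^2 + 4 * C * m e * m (-e)) with hsdef
    have hs0 : 0 ≤ s := Real.sqrt_nonneg _
    have hs2 : s^2 = a^2 + 4 * C * m e * m (-e) := Real.sq_sqrt (by positivity)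
    have hsa : |a| < s := by
      have h5 : Real.sqrt (a^2) < Real.sqrt (a^2 + 4 * C * m e * m (-e)) :=
        Real.sqrt_lt_sqrt (by positivity) (by linarith)
      rwa [Real.sqrt_sq_eq_abs] at h5
    have hsub : s ≤ Real.sqrt (1 + 4 * C) := by
      apply Real.sqrt_le_sqrt
      nlinarith [abs_nonneg a, sq_abs a]
    have hpos : 0 < a + s := by
      have := neg_abs_le a; linarith
    rw [div_le_iff₀ hD0]
    have hdiff : 0 ≤ 1 + Real.sqrt (1 + 4 * C) - (s - a) := by linarith
    have key : 4 * C * κ^2 ≤ (a + s) * (1 + Real.sqrt (1 + 4 * C)) := by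
      nlinarith [mul_nonneg hpos.le hdiff, hs2, hbκ]
    have hx : (a + s) * (1 + Real.sqrt (1 + 4 * C))
        = 2 * (u e * (1 + Real.sqrt (1 + 4 * C))) := by rw [← h2u]; ring
    linarith [key, hx.le, hx.ge]
  exact ⟨main, ⟨2 * C * κ^2 / (1 + Real.sqrt (1 + 4 * C)), by positivity, main⟩⟩
end

section
/- For every e ∈ 𝕍 (including the negative unit vectors) one has u_z(e) = √C_z · e^{⟨θ_z, e⟩} · m(e), where θ_z ∈ ℝ^d is defined only through its values on the positive basis vectors. -/
open Finset

lemma mem_unitVecs {d : ℕ} {e : Fin d → ℤ} :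
    e ∈ unitVecs d ↔ (∀ i, |e i| ≤ 1) ∧ ∑ i, |e i| = 1 := by
  simp only [unitVecs, Finset.mem_filter, Finset.mem_Icc, Pi.le_def, and_congr_left_iff]
  intro _
  constructor
  · rintro ⟨h1, h2⟩ i
    exact abs_le.2 ⟨h1 i, h2 i⟩
  · intro h
    exact ⟨fun i => (abs_le.1 (h i)).1, fun i => (abs_le.1 (h i)).2⟩

lemma unitVecs_classify {d : ℕ} {e : Fin d → ℤ} (h : e ∈ unitVecs d) :
    ∃ j : Fin d, (e = fun i => if i = j then 1 else 0) ∨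
      (e = fun i => if i = j then -1 else 0) := by
  rw [mem_unitVecs] at h
  obtain ⟨hle, hsum⟩ := h
  have hne : ∃ j, e j ≠ 0 := by
    by_contra hc
    push_neg at hc
    simp [hc] at hsum
  obtain ⟨j, hj⟩ := hne
  have hj1 : |e j| = 1 := le_antisymm (hle j) (Int.one_le_abs hj)
  have hrest : ∀ i, i ≠ j → e i = 0 := by
    intro i hi
    by_contra hc
    have hi1 : 1 ≤ |e i| := Int.one_le_abs hc
    have : (2:ℤ) ≤ ∑ k, |e k| := by
      have hsub : ({i, j} : Finset (Fin d)) ⊆ Finset.univ := Finset.subset_univ _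
      have : ∑ k ∈ ({i, j} : Finset (Fin d)), |e k| ≤ ∑ k, |e k| :=
        Finset.sum_le_sum_of_subset_of_nonneg hsub (fun k _ _ => abs_nonneg _)
      rw [Finset.sum_pair hi] at this
      omega
    omega
  rcases abs_eq (by norm_num : (0:ℤ) ≤ 1) |>.1 hj1 with h1 | h1
  · exact ⟨j, Or.inl (funext fun i => by by_cases hij : i = j <;> first | simp [hij, hrest i hij] | simp [hij, h1])⟩
  · exact ⟨j, Or.inr (funext fun i => by by_cases hij : i = j <;> first | simp [hij, hrest i hij] | simp [hij, h1])⟩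

lemma basis_mem_unitVecs {d : ℕ} (j : Fin d) :
    (fun i => if i = j then (1:ℤ) else 0) ∈ unitVecs d := by
  rw [mem_unitVecs]
  constructor
  · intro i; by_cases hij : i = j <;> simp [hij]
  · simp [apply_ite]


lemma innZ_neg {d : ℕ} (z : Fin d → ℝ) (e : Fin d → ℤ) : innZ z (-e) = -innZ z e := by
  unfold innZ
  rw [← Finset.sum_neg_distrib]
  congr 1 with i
  simp only [Pi.neg_apply, Int.cast_neg]
  ring

/-- for every `e ∈ 𝕍` (including negative unit vectors),
`u_z(e) = √C_z · e^{⟨θ_z,e⟩} · m(e)`, with `θ_z` defined through the positive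
basis vectors only. -/
theorem stmt7 (d : ℕ) (hd : 1 ≤ d) (z : Fin d → ℝ) (hz : ∑ i, |z i| < 1)
    (m : (Fin d → ℤ) → ℝ) (hm : ∀ e ∈ unitVecs d, 0 < m e ∧ m e ≤ 1)
    (hm1 : ∑ e ∈ unitVecs d, m e = 1)
    (C : ℝ) (hC : 0 < C)
    (hfC : (1/2) * ∑ e ∈ unitVecs d,
      Real.sqrt ((innZ z e)^2 + 4 * C * m e * m (-e)) = 1)
    (u : (Fin d → ℤ) → ℝ)
    (hu : ∀ e ∈ unitVecs d,
      2 * u e = innZ z e + Real.sqrt ((innZ z e)^2 + 4 * C * m e * m (-e)))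
    (θ : Fin d → ℝ)
    (hθ : ∀ j : Fin d, θ j = Real.log
      (u (fun i => if i = j then 1 else 0) /
        (Real.sqrt C * m (fun i => if i = j then 1 else 0)))) :
    ∀ e ∈ unitVecs d,
      u e = Real.sqrt C * Real.exp (∑ i, θ i * (e i : ℝ)) * m e := by
  -- positivity of u on unitVecs
  have upos : ∀ e ∈ unitVecs d, 0 < u e := by
    intro e he
    have hme := (hm e he).1
    have hmne := (hm _ (neg_mem_unitVecs he)).1
    have h4 : 0 < 4 * C * m e * m (-e) := by positivity
    have hs : |innZ z e| < Real.sqrt ((innZ z e)^2 + 4 * C * m e * m (-e)) := by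
      rw [← Real.sqrt_sq_eq_abs]
      exact Real.sqrt_lt_sqrt (sq_nonneg _) (by linarith)
    have := hu e he
    have := neg_abs_le (innZ z e)
    linarith
  -- product identity
  have uprod : ∀ e ∈ unitVecs d, u e * u (-e) = C * m e * m (-e) := by
    intro e he
    have h1 := hu e he
    have h2 := hu (-e) (neg_mem_unitVecs he)
    rw [innZ_neg, neg_neg] at h2
    have hsq : (Real.sqrt ((innZ z e)^2 + 4 * C * m e * m (-e)))^2
        = (innZ z e)^2 + 4 * C * m e * m (-e) := by
      have hme := (hm e he).1
      have hmne := (hm _ (neg_mem_unitVecs he)).1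
      exact Real.sq_sqrt (by positivity)
    have h2' : 2 * u (-e) = -innZ z e + Real.sqrt ((innZ z e)^2 + 4 * C * m e * m (-e)) := by
      rw [h2]; ring_nf
    have h4 : (2 * u e) * (2 * u (-e))
        = (innZ z e + Real.sqrt ((innZ z e)^2 + 4 * C * m e * m (-e)))
          * (-innZ z e + Real.sqrt ((innZ z e)^2 + 4 * C * m e * m (-e))) := by
      rw [h1, h2']
    linear_combination h4/4 + hsq/4
  intro e he
  obtain ⟨j, hcase⟩ := unitVecs_classify he
  have hbj := basis_mem_unitVecs (d := d) j
  have hub := upos _ hbj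
  have hmb := (hm _ hbj).1
  have hsC : 0 < Real.sqrt C := Real.sqrt_pos.2 hC
  have hexp : Real.exp (θ j)
      = u (fun i => if i = j then 1 else 0)
        / (Real.sqrt C * m (fun i => if i = j then 1 else 0)) := by
    rw [hθ j, Real.exp_log (by positivity)]
  rcases hcase with h | h
  · subst h
    have hsum : (∑ i, θ i * (((if i = j then (1:ℤ) else 0) : ℤ) : ℝ)) = θ j := by
      rw [Finset.sum_eq_single j]
      · simp
      · intro i _ hij; simp [hij]
      · simp
    rw [hsum, hexp]
    field_simp
  · have hne : e = -(fun i => if i = j then (1:ℤ) else 0) := by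
      funext i; rw [h]; by_cases hij : i = j <;> simp [hij]
    have hsum : (∑ i, θ i *
        (((-(fun i => if i = j then (1:ℤ) else 0) : Fin d → ℤ) i : ℤ) : ℝ)) = -θ j := by
      rw [← hne, h, Finset.sum_eq_single j]
      · simp
      · intro i _ hij; simp [hij]
      · simp
    have hprod := uprod _ hbj
    subst h
    rw [hne, hsum, Real.exp_neg, hexp]
    have hCC : Real.sqrt C * Real.sqrt C = C := Real.mul_self_sqrt hC.le
    have hmneb := (hm _ (neg_mem_unitVecs hbj)).1
    field_simp
    linear_combination hprod - (m (fun i => if i = j then (1:ℤ) else 0)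
      * m (-(fun i => if i = j then (1:ℤ) else 0))) * hCC
end
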